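/- Let $H$ be a real inner product space, let $\kappa, \Delta t, C_I, H_0 > 0$, let $I_H : H \to H$ be linear, and suppose $\|\phi - I_H\phi\| \le C_I H_0 \|\nabla\phi\|$ for some seminorm $\|\nabla\cdot\|$. If $\mu \ge \frac{\kappa}{2 C_I^2 H_0^2}$, then for all $\phi$: $2\kappa\Delta t\|\nabla\phi\|^2 + 2\mu\Delta t\|I_H\phi\|^2 \ge \frac{\kappa\Delta t}{2 C_I^2 H_0^2}\|\phi\|^2 + \kappa\Delta t\|\nabla\phi\|^2$. -/
import Mathlib

/-- Lower bound (3.8) in the heat-equation CDA analysis. -/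
theorem heat_cda_lower_bound {H : Type*} [NormedAddCommGroup H] [InnerProductSpace ℝ H]
    (κ Δt CI H0 μ : ℝ) (IH : H →ₗ[ℝ] H) (g : H → ℝ)
    (hκ : 0 < κ) (hΔt : 0 < Δt) (hCI : 0 < CI) (hH0 : 0 < H0)
    (hinterp : ∀ φ : H, ‖φ - IH φ‖ ≤ CI * H0 * g φ)
    (hμ : μ ≥ κ / (2 * CI^2 * H0^2)) :
    ∀ φ : H,
      2 * κ * Δt * (g φ)^2 + 2 * μ * Δt * ‖IH φ‖^2
        ≥ κ * Δt / (2 * CI^2 * H0^2) * ‖φ‖^2 + κ * Δt * (g φ)^2 := by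
  intro φ
  have h1 : ‖φ‖ ≤ ‖φ - IH φ‖ + ‖IH φ‖ := by
    simpa using norm_add_le (φ - IH φ) (IH φ)
  have h2 := hinterp φ
  have h3 : (0:ℝ) ≤ ‖φ - IH φ‖ := norm_nonneg _
  have h4 : (0:ℝ) ≤ ‖IH φ‖ := norm_nonneg _
  have h5 : (0:ℝ) ≤ ‖φ‖ := norm_nonneg _
  have hkey : ‖φ‖^2 ≤ 2 * (CI*H0*g φ)^2 + 2 * ‖IH φ‖^2 := by
    nlinarith [sq_nonneg (‖φ - IH φ‖ - ‖IH φ‖), sq_nonneg (CI*H0*g φ - ‖φ - IH φ‖)]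
  have hC : (0:ℝ) < 2 * CI^2 * H0^2 := by positivity
  rw [ge_iff_le, div_mul_eq_mul_div, div_add' _ _ _ (ne_of_gt hC), div_le_iff₀ hC]
  have hμ' : κ ≤ μ * (2 * CI^2 * H0^2) := by
    rw [ge_iff_le, div_le_iff₀ hC] at hμ; linarith
  nlinarith [mul_le_mul_of_nonneg_left hkey (le_of_lt (mul_pos hκ hΔt)),
    mul_le_mul_of_nonneg_right hμ' (mul_nonneg (mul_nonneg (by norm_num : (0:ℝ) ≤ 2) hΔt.le) (sq_nonneg ‖IH φ‖))]
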